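/- Let Γ be a subset of ℝ \ [−1,1]. If Γ either has a finite accumulation point lying in ℝ \ [−1,1], or is unbounded (has ∞ as an accumulation point), then the linear span of the functions t ↦ 1/(t − γ), γ ∈ Γ, is dense in C[−1,1] with the uniform norm. -/

import Mathlib

open Set Filter Topology Polynomial

namespace RatDenseAux

lemma t_abs_le (t : Set.Icc (-1:ℝ) 1) : |(t:ℝ)| ≤ 1 := abs_le.mpr ⟨t.2.1, t.2.2⟩

lemma one_lt_abs_of_notIcc {γ : ℝ} (hγ : γ ∉ Set.Icc (-1:ℝ) 1) : 1 < |γ| := by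
  rw [Set.mem_Icc] at hγ; push_neg at hγ
  rcases le_or_gt (-1:ℝ) γ with h | h
  · exact lt_of_lt_of_le (hγ h) (le_abs_self γ)
  · calc (1:ℝ) < -γ := by linarith
      _ ≤ |γ| := neg_le_abs γ

lemma sub_lower {γ : ℝ} (hγ : γ ∉ Set.Icc (-1:ℝ) 1) (t : Set.Icc (-1:ℝ) 1) :
    |γ| - 1 ≤ |(t:ℝ) - γ| := by
  have h1 := t_abs_le t
  have : |γ| - |(t:ℝ)| ≤ |γ - (t:ℝ)| := abs_sub_abs_le_abs_sub _ _
  rw [abs_sub_comm] at this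
  linarith

lemma sub_ne {γ : ℝ} (hγ : γ ∉ Set.Icc (-1:ℝ) 1) (t : Set.Icc (-1:ℝ) 1) :
    (t:ℝ) - γ ≠ 0 := by
  have h1 := one_lt_abs_of_notIcc hγ
  have h2 := sub_lower hγ t
  intro h
  rw [h, abs_zero] at h2
  linarith

/-- The basic rational function `t ↦ (t - γ)⁻¹` as a continuous map. -/
noncomputable def F (γ : ℝ) (hγ : γ ∉ Set.Icc (-1:ℝ) 1) : C(Set.Icc (-1:ℝ) 1, ℝ) :=
  ⟨fun t => ((t:ℝ) - γ)⁻¹, Continuous.inv₀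
    (by fun_prop) (fun t => sub_ne hγ t)⟩

lemma F_apply (γ : ℝ) (hγ : γ ∉ Set.Icc (-1:ℝ) 1) (t : Set.Icc (-1:ℝ) 1) :
    F γ hγ t = ((t:ℝ) - γ)⁻¹ := rfl

lemma norm_F_le {γ : ℝ} (hγ : γ ∉ Set.Icc (-1:ℝ) 1) : ‖F γ hγ‖ ≤ (|γ| - 1)⁻¹ := by
  have h1 := one_lt_abs_of_notIcc hγ
  rw [ContinuousMap.norm_le _ (inv_nonneg.mpr (by linarith))]
  intro t
  have h2 := sub_lower hγ t
  rw [F_apply, Real.norm_eq_abs, abs_inv]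
  exact inv_anti₀ (by linarith) h2


lemma scalar_id (t γ : ℝ) (h : t - γ ≠ 0) (n : ℕ) :
    γ^(n+1) * (t - γ)⁻¹ + ((∑ k ∈ Finset.range n, γ^(n-k) * t^k) + t^n)
      = t^(n+1) * (t - γ)⁻¹ := by
  have key := geom_sum₂_mul t γ (n+1)
  rw [Finset.sum_range_succ] at key
  simp only [Nat.add_sub_cancel, Nat.sub_self, pow_zero, mul_one] at key
  have hsum : ∑ i ∈ Finset.range n, t^i * γ^(n-i) = ∑ k ∈ Finset.range n, γ^(n-k) * t^k :=
    Finset.sum_congr rfl (fun i _ => mul_comm _ _)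
  rw [hsum] at key
  field_simp
  linear_combination key

end RatDenseAux

open RatDenseAux

/-- If Γ ⊆ ℝ \ [-1,1] has a finite accumulation point in ℝ \ [-1,1], or is unbounded,
then the span of t ↦ 1/(t - γ), γ ∈ Γ, is dense in C[-1,1]. -/
theorem rational_functions_dense (Γ : Set ℝ) (hΓ : ∀ γ ∈ Γ, γ ∉ Set.Icc (-1:ℝ) 1)
    (hacc : (∃ x : ℝ, x ∉ Set.Icc (-1:ℝ) 1 ∧ AccPt x (Filter.principal Γ)) ∨
      ¬ Bornology.IsBounded Γ) :
    Dense (Submodule.span ℝ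
        {F : C(Set.Icc (-1:ℝ) 1, ℝ) |
          ∃ γ ∈ Γ, ∀ t : Set.Icc (-1:ℝ) 1, F t = 1 / ((t : ℝ) - γ)} :
        Set C(Set.Icc (-1:ℝ) 1, ℝ)) := by
  set S : Set C(Set.Icc (-1:ℝ) 1, ℝ) :=
    {F : C(Set.Icc (-1:ℝ) 1, ℝ) |
      ∃ γ ∈ Γ, ∀ t : Set.Icc (-1:ℝ) 1, F t = 1 / ((t : ℝ) - γ)} with hSdef
  rw [Submodule.dense_iff_topologicalClosure_eq_top]
  set M := (Submodule.span ℝ S).topologicalClosure with hMdef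
  rw [eq_top_iff]
  have hMclosed : IsClosed (M : Set C(Set.Icc (-1:ℝ) 1, ℝ)) :=
    Submodule.isClosed_topologicalClosure _
  have hFmem : ∀ γ (hγΓ : γ ∈ Γ), F γ (hΓ γ hγΓ) ∈ M := by
    intro γ hγΓ
    refine Submodule.le_topologicalClosure _ (Submodule.subset_span ?_)
    exact ⟨γ, hγΓ, fun t => by rw [F_apply, one_div]⟩
  have hlim : ∀ (g : C(Set.Icc (-1:ℝ) 1, ℝ)),
      (∀ ε > 0, ∃ m ∈ M, ‖g - m‖ < ε) → g ∈ M := by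
    intro g h
    have : g ∈ closure (M : Set C(Set.Icc (-1:ℝ) 1, ℝ)) := by
      rw [Metric.mem_closure_iff]
      intro ε hε
      obtain ⟨m, hm, hlt⟩ := h ε hε
      exact ⟨m, hm, by rwa [dist_eq_norm]⟩
    rwa [hMclosed.closure_eq] at this
  rcases hacc with ⟨x, hx, hxacc⟩ | hunb
  · -- Case 1: finite accumulation point x outside [-1,1]
    set u : C(Set.Icc (-1:ℝ) 1, ℝ) := F x hx with hudef
    have hδ : (0:ℝ) < |x| - 1 := by linarith [one_lt_abs_of_notIcc hx]
    -- points of Γ arbitrarily near x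
    have hnear : ∀ ε > 0, ∃ γ ∈ Γ, γ ≠ x ∧ |γ - x| < ε := by
      intro ε hε
      obtain ⟨y, ⟨hyU, hyΓ⟩, hyne⟩ := accPt_iff_nhds.mp hxacc
        (Metric.ball x ε) (Metric.ball_mem_nhds _ hε)
      exact ⟨y, hyΓ, hyne, by rwa [Metric.mem_ball, Real.dist_eq] at hyU⟩
    -- key algebraic identity
    have hiden : ∀ (γ : ℝ) (hγ : γ ∉ Set.Icc (-1:ℝ) 1) (k : ℕ),
        F γ hγ * u ^ k = u ^ (k+1) + (γ - x) • (F γ hγ * u ^ (k+1)) := by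
      intro γ hγ k
      ext t
      have h1 := sub_ne hγ t
      have h2 := sub_ne hx t
      simp only [ContinuousMap.mul_apply, ContinuousMap.add_apply,
        ContinuousMap.smul_apply, ContinuousMap.pow_apply, smul_eq_mul, hudef, F_apply]
      field_simp
      rw [sub_add_sub_cancel, pow_succ, mul_assoc, one_div, inv_mul_cancel₀ h2, mul_one]
    -- limit step: u^(k+1) ∈ M given products for exponent k
    have hlimit : ∀ k : ℕ,
        (∀ γ (hγΓ : γ ∈ Γ), γ ≠ x → F γ (hΓ γ hγΓ) * u ^ k ∈ M) → u ^ (k+1) ∈ M := by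
      intro k hk
      apply hlim
      intro ε hε
      set C : ℝ := (2 / (|x| - 1)) * ‖u‖ ^ (k+1) + 1 with hCdef
      have hC : 0 < C := by positivity
      obtain ⟨γ, hγΓ, hγne, hγd⟩ := hnear (min ((|x| - 1)/2) (ε / C))
        (lt_min (by linarith) (by positivity))
      have hγIcc := hΓ γ hγΓ
      refine ⟨F γ hγIcc * u ^ k, hk γ hγΓ hγne, ?_⟩
      have hrw : u ^ (k+1) - F γ hγIcc * u ^ k
          = -((γ - x) • (F γ hγIcc * u ^ (k+1))) := by
        rw [hiden γ hγIcc k]; abel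
      rw [hrw, norm_neg]
      have hns : ‖(γ - x) • (F γ hγIcc * u ^ (k+1))‖
          = |γ - x| * ‖F γ hγIcc * u ^ (k+1)‖ := by
        have h := norm_smul (γ - x) (F γ hγIcc * u ^ (k+1))
        rwa [Real.norm_eq_abs] at h
      rw [hns]
      -- bound ‖F γ‖ ≤ 2/(|x|-1)
      have hγd1 : |γ - x| < (|x| - 1)/2 := lt_of_lt_of_le hγd (min_le_left _ _)
      have hγd2 : |γ - x| < ε / C := lt_of_lt_of_le hγd (min_le_right _ _)
      have habs : |x| - (|x|-1)/2 ≤ |γ| := by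
        have : |x| - |γ| ≤ |x - γ| := abs_sub_abs_le_abs_sub _ _
        rw [abs_sub_comm] at this
        linarith
      have hFb : ‖F γ hγIcc‖ ≤ 2 / (|x| - 1) := by
        refine le_trans (norm_F_le hγIcc) ?_
        rw [show (2:ℝ) / (|x| - 1) = ((|x| - 1)/2)⁻¹ by rw [inv_div]]
        exact inv_anti₀ (by linarith) (by linarith)
      have hprod : ‖F γ hγIcc * u ^ (k+1)‖ ≤ (2 / (|x| - 1)) * ‖u‖ ^ (k+1) := by
        calc ‖F γ hγIcc * u ^ (k+1)‖ ≤ ‖F γ hγIcc‖ * ‖u ^ (k+1)‖ := norm_mul_le _ _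
          _ ≤ (2 / (|x| - 1)) * ‖u ^ (k+1)‖ := by
              exact mul_le_mul_of_nonneg_right hFb (norm_nonneg _)
          _ ≤ (2 / (|x| - 1)) * ‖u‖ ^ (k+1) := by
              exact mul_le_mul_of_nonneg_left (norm_pow_le' u (Nat.succ_pos k))
                (div_nonneg (by norm_num) (by linarith))
      calc |γ - x| * ‖F γ hγIcc * u ^ (k+1)‖
          ≤ |γ - x| * ((2 / (|x| - 1)) * ‖u‖ ^ (k+1)) := by
            exact mul_le_mul_of_nonneg_left hprod (abs_nonneg _)
        _ < ε := by
            have h1 : (0:ℝ) ≤ (2 / (|x| - 1)) * ‖u‖ ^ (k+1) := by positivity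
            have h2 : (2 / (|x| - 1)) * ‖u‖ ^ (k+1) < C := by rw [hCdef]; linarith
            have h3 : (0:ℝ) ≤ |γ - x| := abs_nonneg _
            have h4 : |γ - x| * C < ε := (lt_div_iff₀ hC).mp hγd2
            have h5 : |γ - x| * ((2 / (|x| - 1)) * ‖u‖ ^ (k+1)) ≤ |γ - x| * C :=
              mul_le_mul_of_nonneg_left (le_of_lt h2) h3
            exact lt_of_le_of_lt h5 h4
    -- main induction for γ ≠ x
    have mainne : ∀ k : ℕ, ∀ γ (hγΓ : γ ∈ Γ), γ ≠ x → F γ (hΓ γ hγΓ) * u ^ k ∈ M := by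
      intro k
      induction k with
      | zero => intro γ hγΓ _; simpa using hFmem γ hγΓ
      | succ k ih =>
        intro γ hγΓ hne
        have hup : u ^ (k+1) ∈ M := hlimit k ih
        have hγIcc := hΓ γ hγΓ
        have hiden' : F γ hγIcc * u ^ (k+1)
            = (γ - x)⁻¹ • (F γ hγIcc * u ^ k - u ^ (k+1)) := by
          rw [hiden γ hγIcc k, add_sub_cancel_left, smul_smul,
            inv_mul_cancel₀ (sub_ne_zero.mpr hne), one_smul]
        rw [hiden']
        exact M.smul_mem _ (M.sub_mem (ih γ hγΓ hne) hup)
    have hupow : ∀ k : ℕ, u ^ (k+1) ∈ M := fun k => hlimit k (mainne k)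
    -- density via Stone-Weierstrass on the algebra generated by u
    have hsep : (Algebra.adjoin ℝ ({u} : Set C(Set.Icc (-1:ℝ) 1, ℝ))).SeparatesPoints := by
      intro s t hst
      refine ⟨u, ⟨u, Algebra.subset_adjoin rfl, rfl⟩, ?_⟩
      simp only [hudef, F_apply]
      intro h
      rw [inv_inj, sub_left_injective.eq_iff] at h
      exact hst (Subtype.ext h)
    have hAtop := ContinuousMap.subalgebra_topologicalClosure_eq_top_of_separatesPoints
      _ hsep
    -- w = (t - x), with w * u = 1
    set w : C(Set.Icc (-1:ℝ) 1, ℝ) := ⟨fun t => (t:ℝ) - x, by fun_prop⟩ with hwdef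
    have huw : w * u = 1 := by
      ext t
      simp only [ContinuousMap.mul_apply, ContinuousMap.one_apply, hwdef, hudef,
        F_apply, ContinuousMap.coe_mk]
      exact mul_inv_cancel₀ (sub_ne hx t)
    have haeval : ∀ q : Polynomial ℝ, aeval u (Polynomial.X * q) ∈ M := by
      intro q
      induction q using Polynomial.induction_on' with
      | add p q hp hq => rw [mul_add, map_add]; exact M.add_mem hp hq
      | monomial n a =>
        have : (aeval u) (Polynomial.X * Polynomial.monomial n a) = a • u ^ (n+1) := by
          rw [map_mul, aeval_X, aeval_monomial, Algebra.smul_def, pow_succ]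
          ring
        rw [this]
        exact M.smul_mem _ (hupow n)
    intro f _
    apply hlim
    intro ε hε
    have hg : f * w ∈ closure ((Algebra.adjoin ℝ ({u} : Set C(Set.Icc (-1:ℝ) 1, ℝ)) :
        Subalgebra ℝ C(Set.Icc (-1:ℝ) 1, ℝ)) : Set C(Set.Icc (-1:ℝ) 1, ℝ)) := by
      rw [← Subalgebra.topologicalClosure_coe, hAtop]
      trivial
    obtain ⟨a, haA, hd⟩ := Metric.mem_closure_iff.mp hg (ε / (‖u‖ + 1)) (by positivity)
    have haA' : a ∈ (aeval u : Polynomial ℝ →ₐ[ℝ] C(Set.Icc (-1:ℝ) 1, ℝ)).range := by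
      rwa [← Algebra.adjoin_singleton_eq_range_aeval]
    obtain ⟨q, rfl⟩ := haA'
    refine ⟨u * aeval u q, ?_, ?_⟩
    · have : u * aeval u q = aeval u (Polynomial.X * q) := by rw [map_mul, aeval_X]
      rw [this]; exact haeval q
    · have hf : f = u * (f * w) := by
        calc f = f * (w * u) := by rw [huw, mul_one]
          _ = u * (f * w) := by ring
      have hrw : f - u * (aeval u q) = u * (f * w - aeval u q) := by
        nth_rewrite 1 [hf]; ring
      rw [hrw]
      have hdd : ‖f * w - aeval u q‖ < ε / (‖u‖ + 1) := by rwa [dist_eq_norm] at hd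
      calc ‖u * (f * w - aeval u q)‖ ≤ ‖u‖ * ‖f * w - aeval u q‖ := norm_mul_le _ _
        _ < ε := by
          have h0 : (0:ℝ) ≤ ‖f * w - aeval u q‖ := norm_nonneg _
          have h1 : (0:ℝ) ≤ ‖u‖ := norm_nonneg _
          have h2 : ‖f * w - aeval u q‖ * (‖u‖ + 1) < ε :=
            (lt_div_iff₀ (by positivity)).mp hdd
          nlinarith
  · -- Case 2: Γ unbounded
    have hbig : ∀ R : ℝ, ∃ γ ∈ Γ, R < |γ| := by
      intro R
      by_contra h
      push_neg at h
      exact hunb (isBounded_iff_forall_norm_le.mpr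
        ⟨R, fun γ hγ => by simpa [Real.norm_eq_abs] using h γ hγ⟩)
    set T : C(Set.Icc (-1:ℝ) 1, ℝ) := ⟨fun t => (t:ℝ), by fun_prop⟩ with hTdef
    have hpow : ∀ n : ℕ, T ^ n ∈ M := by
      intro n
      induction n using Nat.strong_induction_on with
      | _ n ih =>
        apply hlim
        intro ε hε
        obtain ⟨γ, hγΓ, hγbig⟩ := hbig (max 2 (1 + 1/ε))
        have hγIcc := hΓ γ hγΓ
        have hγ1 : (1:ℝ) < |γ| := one_lt_abs_of_notIcc hγIcc
        set m : C(Set.Icc (-1:ℝ) 1, ℝ) := γ^(n+1) • F γ hγIcc +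
          ∑ k ∈ Finset.range n, γ^(n-k) • T ^ k with hmdef
        have hmM : m ∈ M := M.add_mem (M.smul_mem _ (hFmem γ hγΓ))
          (Submodule.sum_mem _ (fun k hk => M.smul_mem _ (ih k (Finset.mem_range.mp hk))))
        refine ⟨-m, M.neg_mem hmM, ?_⟩
        have hbound : ∀ t : Set.Icc (-1:ℝ) 1, |m t + (t:ℝ)^n| ≤ (|γ| - 1)⁻¹ := by
          intro t
          have hne := sub_ne hγIcc t
          have hmt : m t + (t:ℝ)^n = (t:ℝ)^(n+1) * ((t:ℝ) - γ)⁻¹ := by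
            simp only [hmdef, ContinuousMap.add_apply, ContinuousMap.smul_apply,
              ContinuousMap.coe_sum, Finset.sum_apply, ContinuousMap.pow_apply,
              hTdef, ContinuousMap.coe_mk, smul_eq_mul, F_apply]
            have := scalar_id (t:ℝ) γ hne n
            linarith [this]
          rw [hmt, abs_mul, abs_inv]
          have h1 : |(t:ℝ)^(n+1)| ≤ 1 := by
            rw [abs_pow]; exact pow_le_one₀ (abs_nonneg _) (t_abs_le t)
          have h2 := sub_lower hγIcc t
          have h3 : (0:ℝ) < |(t:ℝ) - γ| := by linarith
          calc |(t:ℝ)^(n+1)| * |(t:ℝ) - γ|⁻¹ ≤ 1 * |(t:ℝ) - γ|⁻¹ := by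
                exact mul_le_mul_of_nonneg_right h1 (by positivity)
            _ = |(t:ℝ) - γ|⁻¹ := one_mul _
            _ ≤ (|γ| - 1)⁻¹ := inv_anti₀ (by linarith) h2
        have hnorm : ‖T ^ n - -m‖ ≤ (|γ| - 1)⁻¹ := by
          rw [sub_neg_eq_add, add_comm]
          rw [ContinuousMap.norm_le _ (inv_nonneg.mpr (by linarith))]
          intro t
          have := hbound t
          simp [Real.norm_eq_abs]; exact this
        have hlt : (|γ| - 1)⁻¹ < ε := by
          have h1 : 1 + 1/ε < |γ| := lt_of_le_of_lt (le_max_right _ _) hγbig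
          have h2 : 1/ε < |γ| - 1 := by linarith
          have h3 : (0:ℝ) < 1/ε := by positivity
          calc (|γ| - 1)⁻¹ < (1/ε)⁻¹ := inv_strictAnti₀ h3 h2
            _ = ε := by rw [one_div, inv_inv]
        linarith [hnorm, hlt]
    intro f _
    have hf : f ∈ closure ((polynomialFunctions (Set.Icc (-1:ℝ) 1) :
        Subalgebra ℝ C(Set.Icc (-1:ℝ) 1, ℝ)) : Set C(Set.Icc (-1:ℝ) 1, ℝ)) := by
      rw [← Subalgebra.topologicalClosure_coe, polynomialFunctions_closure_eq_top]
      trivial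
    have hPF : ((polynomialFunctions (Set.Icc (-1:ℝ) 1)) :
        Set C(Set.Icc (-1:ℝ) 1, ℝ)) ⊆ (M : Set C(Set.Icc (-1:ℝ) 1, ℝ)) := by
      intro g hg
      rw [polynomialFunctions_coe] at hg
      obtain ⟨p, rfl⟩ := hg
      have : (Polynomial.toContinuousMapOnAlgHom (Set.Icc (-1:ℝ) 1)) p
          = ∑ i ∈ Finset.range (p.natDegree + 1), p.coeff i • T ^ i := by
        ext t
        simp only [Polynomial.toContinuousMapOnAlgHom_apply,
          Polynomial.toContinuousMapOn_apply, Polynomial.toContinuousMap_apply,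
          ContinuousMap.coe_sum, Finset.sum_apply, ContinuousMap.smul_apply,
          ContinuousMap.pow_apply, hTdef, ContinuousMap.coe_mk, smul_eq_mul]
        exact Polynomial.eval_eq_sum_range _
      rw [this]
      exact Submodule.sum_mem _ (fun i _ => M.smul_mem _ (hpow i))
    have := closure_mono hPF hf
    rwa [hMclosed.closure_eq] at this
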